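/- Let k be a field of characteristic 2 and let (V, b₁) and (W, b₂) be finite-dimensional k-vector spaces with non-degenerate alternating bilinear forms. Then there exists a quadratic form Q on V⊗W whose polarization is the tensor product form b (characterized by b(v⊗w, v'⊗w') = b₁(v,v')·b₂(w,w')) and such that Q(v⊗w)=0 for all v∈V, w∈W. In particular Q is non-degenerate and is invariant under any group acting on V and W preserving b₁ and b₂. -/

import Mathlib

open TensorProduct Kronecker

section AuxC2

variable {k V W : Type*} [Field k]
    [AddCommGroup V] [Module k V] [AddCommGroup W] [Module k W] {n m : ℕ}
    (b₁ : LinearMap.BilinForm k V) (b₂ : LinearMap.BilinForm k W)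
    (e : Module.Basis (Fin n) k V) (f : Module.Basis (Fin m) k W)

private noncomputable def AuxC2 (x y : V ⊗[k] W) (i i' : Fin n) : k :=
  ∑ j, ∑ j', (e.tensorProduct f).repr x (i, j) * (e.tensorProduct f).repr y (i', j') *
      (b₁ (e i) (e i') * b₂ (f j) (f j'))

private lemma triC2 (g : Fin n → Fin n → k) (hd : ∀ i, g i i = 0) :
    ∑ i, ∑ i', g i i' = ∑ i, ∑ i', (if i < i' then g i i' + g i' i else 0) := by
  have key : ∀ i i' : Fin n,
      g i i' = (if i < i' then g i i' else 0) + (if i' < i then g i i' else 0) := by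
    intro i i'
    rcases lt_trichotomy i i' with h | h | h
    · rw [if_pos h, if_neg (asymm h), add_zero]
    · subst h; simp [hd]
    · rw [if_neg (asymm h), if_pos h, zero_add]
  have split : ∀ i i' : Fin n, (if i < i' then g i i' + g i' i else 0)
      = (if i < i' then g i i' else 0) + (if i < i' then g i' i else 0) := by
    intro i i'; split_ifs <;> simp
  calc ∑ i, ∑ i', g i i'
      = ∑ i, ∑ i', ((if i < i' then g i i' else 0) + (if i' < i then g i i' else 0)) :=
        Finset.sum_congr rfl fun i _ => Finset.sum_congr rfl fun i' _ => key i i'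
    _ = (∑ i, ∑ i', (if i < i' then g i i' else 0))
        + ∑ i, ∑ i', (if i' < i then g i i' else 0) := by
        simp [Finset.sum_add_distrib]
    _ = (∑ i, ∑ i', (if i < i' then g i i' else 0))
        + ∑ i, ∑ i', (if i < i' then g i' i else 0) := by
        congr 1
        exact Finset.sum_comm
    _ = ∑ i, ∑ i', (if i < i' then g i i' + g i' i else 0) := by
        rw [← Finset.sum_add_distrib]
        exact Finset.sum_congr rfl fun i _ => by
          rw [← Finset.sum_add_distrib]
          exact Finset.sum_congr rfl fun i' _ => (split i i').symm

private lemma auxC2_diag (halt₁ : ∀ v : V, b₁ v v = 0) (x y : V ⊗[k] W) (i : Fin n) :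
    AuxC2 b₁ b₂ e f x y i i = 0 := by
  simp [AuxC2, halt₁]

private lemma auxC2_swap (hs₁ : ∀ u u' : V, b₁ u u' = b₁ u' u)
    (hs₂ : ∀ u u' : W, b₂ u u' = b₂ u' u) (x y : V ⊗[k] W) (i i' : Fin n) :
    AuxC2 b₁ b₂ e f x y i' i = AuxC2 b₁ b₂ e f y x i i' := by
  simp only [AuxC2]
  rw [Finset.sum_comm]
  refine Finset.sum_congr rfl fun j _ => Finset.sum_congr rfl fun j' _ => ?_
  rw [hs₁ (e i') (e i), hs₂ (f j') (f j)]
  ring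

private lemma auxC2_add (x y : V ⊗[k] W) (i i' : Fin n) :
    AuxC2 b₁ b₂ e f (x + y) (x + y) i i'
      = AuxC2 b₁ b₂ e f x x i i' + AuxC2 b₁ b₂ e f y y i i'
        + (AuxC2 b₁ b₂ e f x y i i' + AuxC2 b₁ b₂ e f y x i i') := by
  simp only [AuxC2, ← Finset.sum_add_distrib]
  refine Finset.sum_congr rfl fun j _ => Finset.sum_congr rfl fun j' _ => ?_
  simp only [map_add, Finsupp.add_apply]
  ring

private lemma auxC2_smul (a : k) (x : V ⊗[k] W) (i i' : Fin n) :
    AuxC2 b₁ b₂ e f (a • x) (a • x) i i' = a * a * AuxC2 b₁ b₂ e f x x i i' := by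
  simp only [AuxC2, Finset.mul_sum]
  refine Finset.sum_congr rfl fun j _ => Finset.sum_congr rfl fun j' _ => ?_
  simp only [map_smul, Finsupp.smul_apply, smul_eq_mul]
  ring

private lemma sum_reprC2 (B : LinearMap.BilinForm k W) (g : Module.Basis (Fin m) k W) (w w' : W) :
    ∑ j, ∑ j', g.repr w j * g.repr w' j' * B (g j) (g j') = B w w' := by
  conv_rhs => rw [← g.sum_repr w, ← g.sum_repr w']
  simp only [map_sum, LinearMap.sum_apply, map_smul, LinearMap.smul_apply, smul_eq_mul,
    Finset.mul_sum]
  rw [Finset.sum_comm]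
  exact Finset.sum_congr rfl fun j _ => Finset.sum_congr rfl fun j' _ => by ring

private lemma pure_tmulC2 (v v' : V) (w w' : W) :
    b₁.tmul b₂ (v ⊗ₜ[k] w) (v' ⊗ₜ[k] w') = b₁ v v' * b₂ w w' := by
  simp [LinearMap.BilinForm.tensorDistrib_tmul, smul_eq_mul, mul_comm]

private lemma matrix_tmulC2 :
    LinearMap.BilinForm.toMatrix (e.tensorProduct f) (b₁.tmul b₂)
      = (LinearMap.BilinForm.toMatrix e b₁) ⊗ₖ (LinearMap.BilinForm.toMatrix f b₂) := by
  ext ⟨i, j⟩ ⟨i', j'⟩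
  simp only [LinearMap.BilinForm.toMatrix_apply, Module.Basis.tensorProduct_apply, Matrix.kroneckerMap_apply,
    pure_tmulC2]

private lemma coord_tmulC2 (x y : V ⊗[k] W) :
    b₁.tmul b₂ x y = ∑ i, ∑ i', AuxC2 b₁ b₂ e f x y i i' := by
  have h0 : b₁.tmul b₂ = Matrix.toBilin (e.tensorProduct f)
      ((LinearMap.BilinForm.toMatrix e b₁) ⊗ₖ (LinearMap.BilinForm.toMatrix f b₂)) := by
    rw [← matrix_tmulC2 b₁ b₂ e f, Matrix.toBilin_toMatrix]
  rw [h0, Matrix.toBilin_apply, Fintype.sum_prod_type]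
  refine Finset.sum_congr rfl fun i _ => ?_
  simp only [Fintype.sum_prod_type]
  rw [Finset.sum_comm]
  refine Finset.sum_congr rfl fun i' _ => Finset.sum_congr rfl fun j _ =>
    Finset.sum_congr rfl fun j' _ => ?_
  simp only [Matrix.kroneckerMap_apply, LinearMap.BilinForm.toMatrix_apply]
  ring

/-- the alternative expression of the tensor form via the strictly ordered sum -/
private lemma tmul_altC2 (halt₁ : ∀ v : V, b₁ v v = 0)
    (hs₁ : ∀ u u' : V, b₁ u u' = b₁ u' u) (hs₂ : ∀ u u' : W, b₂ u u' = b₂ u' u)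
    (x y : V ⊗[k] W) :
    b₁.tmul b₂ x y = ∑ i, ∑ i',
      (if i < i' then AuxC2 b₁ b₂ e f x y i i' + AuxC2 b₁ b₂ e f y x i i' else 0) := by
  rw [coord_tmulC2,
    triC2 (g := fun i i' => AuxC2 b₁ b₂ e f x y i i') (fun i => auxC2_diag b₁ b₂ e f halt₁ x y i)]
  refine Finset.sum_congr rfl fun i _ => Finset.sum_congr rfl fun i' _ => ?_
  split_ifs with h
  · rw [auxC2_swap b₁ b₂ e f hs₁ hs₂ x y i i']
  · rfl

/-- The quadratic form. -/
private noncomputable def QC2 (halt₁ : ∀ v : V, b₁ v v = 0)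
    (hs₁ : ∀ u u' : V, b₁ u u' = b₁ u' u) (hs₂ : ∀ u u' : W, b₂ u u' = b₂ u' u) :
    QuadraticForm k (V ⊗[k] W) where
  toFun x := ∑ i, ∑ i', if i < i' then AuxC2 b₁ b₂ e f x x i i' else 0
  toFun_smul a x := by
    simp only [smul_eq_mul, Finset.mul_sum, ← mul_assoc]
    refine Finset.sum_congr rfl fun i _ => Finset.sum_congr rfl fun i' _ => ?_
    split_ifs with h
    · rw [auxC2_smul]
    · rw [mul_zero]
  exists_companion' := by
    refine ⟨b₁.tmul b₂, fun x y => ?_⟩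
    rw [tmul_altC2 b₁ b₂ e f halt₁ hs₁ hs₂]
    calc (∑ i, ∑ i', if i < i' then AuxC2 b₁ b₂ e f (x + y) (x + y) i i' else 0)
        = ∑ i, ∑ i', ((if i < i' then AuxC2 b₁ b₂ e f x x i i' else 0)
            + (if i < i' then AuxC2 b₁ b₂ e f y y i i' else 0)
            + (if i < i' then AuxC2 b₁ b₂ e f x y i i' + AuxC2 b₁ b₂ e f y x i i' else 0)) := by
          refine Finset.sum_congr rfl fun i _ => Finset.sum_congr rfl fun i' _ => ?_
          split_ifs with h
          · rw [auxC2_add]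
          · simp
      _ = _ := by simp [Finset.sum_add_distrib]

private lemma QC2_apply (halt₁ : ∀ v : V, b₁ v v = 0)
    (hs₁ : ∀ u u' : V, b₁ u u' = b₁ u' u) (hs₂ : ∀ u u' : W, b₂ u u' = b₂ u' u)
    (x : V ⊗[k] W) :
    QC2 b₁ b₂ e f halt₁ hs₁ hs₂ x
      = ∑ i, ∑ i', if i < i' then AuxC2 b₁ b₂ e f x x i i' else 0 := rfl

private lemma QC2_add (halt₁ : ∀ v : V, b₁ v v = 0)
    (hs₁ : ∀ u u' : V, b₁ u u' = b₁ u' u) (hs₂ : ∀ u u' : W, b₂ u u' = b₂ u' u)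
    (x y : V ⊗[k] W) :
    QC2 b₁ b₂ e f halt₁ hs₁ hs₂ (x + y)
      = QC2 b₁ b₂ e f halt₁ hs₁ hs₂ x + QC2 b₁ b₂ e f halt₁ hs₁ hs₂ y + b₁.tmul b₂ x y := by
  rw [tmul_altC2 b₁ b₂ e f halt₁ hs₁ hs₂]
  simp only [QC2_apply]
  calc (∑ i, ∑ i', if i < i' then AuxC2 b₁ b₂ e f (x + y) (x + y) i i' else 0)
      = ∑ i, ∑ i', ((if i < i' then AuxC2 b₁ b₂ e f x x i i' else 0)
          + (if i < i' then AuxC2 b₁ b₂ e f y y i i' else 0)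
          + (if i < i' then AuxC2 b₁ b₂ e f x y i i' + AuxC2 b₁ b₂ e f y x i i' else 0)) := by
        refine Finset.sum_congr rfl fun i _ => Finset.sum_congr rfl fun i' _ => ?_
        split_ifs with h
        · rw [auxC2_add]
        · simp
    _ = _ := by simp [Finset.sum_add_distrib]

private lemma QC2_polar (halt₁ : ∀ v : V, b₁ v v = 0)
    (hs₁ : ∀ u u' : V, b₁ u u' = b₁ u' u) (hs₂ : ∀ u u' : W, b₂ u u' = b₂ u' u)
    (x y : V ⊗[k] W) :
    QuadraticMap.polar (⇑(QC2 b₁ b₂ e f halt₁ hs₁ hs₂)) x y = b₁.tmul b₂ x y := by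
  simp only [QuadraticMap.polar, QC2_add b₁ b₂ e f halt₁ hs₁ hs₂ x y]
  ring

private lemma QC2_pure (halt₁ : ∀ v : V, b₁ v v = 0) (halt₂ : ∀ w : W, b₂ w w = 0)
    (hs₁ : ∀ u u' : V, b₁ u u' = b₁ u' u) (hs₂ : ∀ u u' : W, b₂ u u' = b₂ u' u)
    (v : V) (w : W) :
    QC2 b₁ b₂ e f halt₁ hs₁ hs₂ (v ⊗ₜ[k] w) = 0 := by
  rw [QC2_apply]
  refine Finset.sum_eq_zero fun i _ => Finset.sum_eq_zero fun i' _ => ?_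
  split_ifs with h
  · have : AuxC2 b₁ b₂ e f (v ⊗ₜ[k] w) (v ⊗ₜ[k] w) i i'
        = (e.repr v i * e.repr v i' * b₁ (e i) (e i'))
          * ∑ j, ∑ j', f.repr w j * f.repr w j' * b₂ (f j) (f j') := by
      simp only [AuxC2, Module.Basis.tensorProduct_repr_tmul_apply, smul_eq_mul, Finset.mul_sum]
      refine Finset.sum_congr rfl fun j _ => Finset.sum_congr rfl fun j' _ => by ring
    rw [this, sum_reprC2, halt₂, mul_zero]
  · rfl

end AuxC2

/-- In characteristic 2, the tensor product of two symplectic spaces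
carries a quadratic form whose polarization is the tensor product form and which
vanishes on pure tensors; in particular it is non-degenerate and invariant under
any pair of maps preserving the two alternating forms. -/
theorem stmt2 {k V W : Type*} [Field k] [CharP k 2]
    [AddCommGroup V] [Module k V] [FiniteDimensional k V]
    [AddCommGroup W] [Module k W] [FiniteDimensional k W]
    (b₁ : LinearMap.BilinForm k V) (b₂ : LinearMap.BilinForm k W)
    (h₁ : b₁.Nondegenerate) (halt₁ : ∀ v : V, b₁ v v = 0)
    (h₂ : b₂.Nondegenerate) (halt₂ : ∀ w : W, b₂ w w = 0) :
    ∃ Q : QuadraticForm k (V ⊗[k] W),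
      (∀ (v v' : V) (w w' : W),
        QuadraticMap.polar (⇑Q) (v ⊗ₜ[k] w) (v' ⊗ₜ[k] w') = b₁ v v' * b₂ w w') ∧
      (∀ (v : V) (w : W), Q (v ⊗ₜ[k] w) = 0) ∧
      (∀ x : V ⊗[k] W, (∀ y : V ⊗[k] W, QuadraticMap.polar (⇑Q) x y = 0) → Q x = 0 → x = 0) ∧
      (∀ (f : V →ₗ[k] V) (g : W →ₗ[k] W),
        (∀ v v' : V, b₁ (f v) (f v') = b₁ v v') →
        (∀ w w' : W, b₂ (g w) (g w') = b₂ w w') →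
        ∀ x : V ⊗[k] W, Q (TensorProduct.map f g x) = Q x) := by
  classical
  have hneg : ∀ a : k, -a = a := fun a => CharTwo.neg_eq a
  have hs₁ : ∀ u u' : V, b₁ u u' = b₁ u' u := by
    intro u u'
    have h := halt₁ (u + u')
    simp only [map_add, LinearMap.add_apply, halt₁ u, halt₁ u', zero_add, add_zero] at h
    have h2 := eq_neg_of_add_eq_zero_left h
    rw [hneg] at h2
    exact h2.symm
  have hs₂ : ∀ u u' : W, b₂ u u' = b₂ u' u := by
    intro u u'
    have h := halt₂ (u + u')
    simp only [map_add, LinearMap.add_apply, halt₂ u, halt₂ u', zero_add, add_zero] at h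
    have h2 := eq_neg_of_add_eq_zero_left h
    rw [hneg] at h2
    exact h2.symm
  set e := Module.finBasis k V
  set f := Module.finBasis k W
  refine ⟨QC2 b₁ b₂ e f halt₁ hs₁ hs₂, ?_, ?_, ?_, ?_⟩
  · intro v v' w w'
    rw [QC2_polar b₁ b₂ e f halt₁ hs₁ hs₂, pure_tmulC2]
  · intro v w
    exact QC2_pure b₁ b₂ e f halt₁ halt₂ hs₁ hs₂ v w
  · -- nondegeneracy
    have hnd : (b₁.tmul b₂).SeparatingLeft := by
      apply LinearMap.separatingLeft_of_det_ne_zero (e.tensorProduct f)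
      have hrfl : LinearMap.toMatrix₂ (e.tensorProduct f) (e.tensorProduct f) (b₁.tmul b₂)
          = LinearMap.BilinForm.toMatrix (e.tensorProduct f) (b₁.tmul b₂) := rfl
      rw [hrfl, matrix_tmulC2 b₁ b₂ e f, Matrix.det_kronecker]
      have hd₁ : (LinearMap.BilinForm.toMatrix e b₁).det ≠ 0 :=
        (LinearMap.separatingLeft_iff_det_ne_zero e).mp h₁.1
      have hd₂ : (LinearMap.BilinForm.toMatrix f b₂).det ≠ 0 :=
        (LinearMap.separatingLeft_iff_det_ne_zero f).mp h₂.1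
      exact mul_ne_zero (pow_ne_zero _ hd₁) (pow_ne_zero _ hd₂)
    intro x hx _
    refine hnd x fun y => ?_
    rw [← QC2_polar b₁ b₂ e f halt₁ hs₁ hs₂]
    exact hx y
  · -- invariance
    intro fl gl hf hg
    have hT : ∀ x y : V ⊗[k] W,
        b₁.tmul b₂ (TensorProduct.map fl gl x) (TensorProduct.map fl gl y)
          = b₁.tmul b₂ x y := by
      have hext : (b₁.tmul b₂).compl₁₂ (TensorProduct.map fl gl) (TensorProduct.map fl gl)
          = b₁.tmul b₂ := by
        apply TensorProduct.ext'
        intro v w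
        apply TensorProduct.ext'
        intro v' w'
        simp only [LinearMap.compl₁₂_apply, TensorProduct.map_tmul]
        rw [pure_tmulC2, pure_tmulC2, hf, hg]
      intro x y
      have := LinearMap.congr_fun (LinearMap.congr_fun hext x) y
      simpa [LinearMap.compl₁₂_apply] using this
    intro x
    induction x using TensorProduct.induction_on with
    | zero => rw [map_zero]
    | tmul v w =>
        rw [TensorProduct.map_tmul, QC2_pure b₁ b₂ e f halt₁ halt₂ hs₁ hs₂,
          QC2_pure b₁ b₂ e f halt₁ halt₂ hs₁ hs₂]
    | add x y ihx ihy =>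
        rw [map_add, QC2_add b₁ b₂ e f halt₁ hs₁ hs₂, QC2_add b₁ b₂ e f halt₁ hs₁ hs₂,
          ihx, ihy, hT x y]
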